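/- For the quadratic function E(λ) = 2 s₀⁻¹ (1-λ)² / (1 - 2 s₂⁻¹ λ²) defined for λ ∈ (-√(s₂/2), √(s₂/2)), where 0 < s₀ < 1 and s₂ = 1 - s₀, the minimum is attained at λ = s₂/2, and the minimum value equals s₀⁻¹ + 1. -/

import Mathlib

/-- For `E(λ) = 2 s₀⁻¹ (1-λ)² / (1 - 2 s₂⁻¹ λ²)` on `|λ| < √(s₂/2)`, with
`0 < s₀ < 1` and `s₂ = 1 - s₀`, the minimum is attained at `λ = s₂/2` and equals
`s₀⁻¹ + 1`. -/
theorem stmt_3 (s₀ s₂ : ℝ) (hs₀ : 0 < s₀) (hs₀' : s₀ < 1) (hs₂ : s₂ = 1 - s₀)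
    (E : ℝ → ℝ)
    (hE : ∀ l : ℝ, E l = 2 * s₀⁻¹ * (1 - l) ^ 2 / (1 - 2 * s₂⁻¹ * l ^ 2)) :
    E (s₂ / 2) = s₀⁻¹ + 1 ∧
    ∀ l : ℝ, |l| < Real.sqrt (s₂ / 2) → E (s₂ / 2) ≤ E l := by
  have hs₂0 : 0 < s₂ := by rw [hs₂]; linarith
  have hmin : E (s₂ / 2) = s₀⁻¹ + 1 := by
    rw [hE]
    have hden : 1 - 2 * s₂⁻¹ * (s₂ / 2) ^ 2 = 1 - s₂ / 2 := by
      field_simp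
    rw [hden]
    have h2 : 1 - s₂ / 2 > 0 := by linarith
    rw [div_eq_iff (ne_of_gt h2)]
    field_simp
    rw [hs₂]; ring
  refine ⟨hmin, fun l hl => ?_⟩
  have hl2 : l ^ 2 < s₂ / 2 := by
    have h1 : |l| ^ 2 < Real.sqrt (s₂ / 2) ^ 2 :=
      pow_lt_pow_left₀ hl (abs_nonneg l) two_ne_zero
    rwa [sq_abs, Real.sq_sqrt (by linarith : (0:ℝ) ≤ s₂ / 2)] at h1
  have hden : 0 < 1 - 2 * s₂⁻¹ * l ^ 2 := by
    have : 2 * s₂⁻¹ * l ^ 2 < 1 := by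
      have he : 2 * s₂⁻¹ * l ^ 2 = (2 * l ^ 2) / s₂ := by ring
      rw [he, div_lt_one hs₂0]
      nlinarith
    linarith
  rw [hmin, hE, le_div_iff₀ hden]
  have hmul : (s₀⁻¹ + 1) * (1 - 2 * s₂⁻¹ * l ^ 2) * (s₀ * s₂) ≤
      2 * s₀⁻¹ * (1 - l) ^ 2 * (s₀ * s₂) := by
    have e1 : (s₀⁻¹ + 1) * (1 - 2 * s₂⁻¹ * l ^ 2) * (s₀ * s₂)
        = (1 + s₀) * (s₂ - 2 * l ^ 2) := by
      field_simp
    have e2 : 2 * s₀⁻¹ * (1 - l) ^ 2 * (s₀ * s₂) = 2 * s₂ * (1 - l) ^ 2 := by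
      field_simp
    rw [e1, e2, hs₂]
    nlinarith [sq_nonneg (2 * l - (1 - s₀))]
  exact le_of_mul_le_mul_right hmul (mul_pos hs₀ hs₂0)
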